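/- Let S : M(D,H₁) → H₂ be linear and weak-* to weak continuous with finite-dimensional range, and suppose p_d ∈ Ran S. Then the dual problem max { (p_d, y)_{H₂} : y ∈ H₂, ‖S* y‖_{C(D,H₁)} ≤ 1 } admits a solution. -/

import Mathlib

open NormedSpace

/-- Let `S : M(D,H₁) → H₂` be linear and weak-* to weak continuous
(the Banach-space dual of a bounded operator `S* : H₂ → C(D,H₁)`, i.e.
`(S u, y) = ⟨u, S* y⟩` for all `u, y`), with finite-dimensional range, and suppose
`p_d ∈ Ran S`.  Then the dual problem
`max { (p_d, y) : ‖S* y‖_{C(D,H₁)} ≤ 1 }` admits a solution. -/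
theorem dual_problem_solvable_of_finite_rank
    (D H₁ H₂ : Type*) [MetricSpace D] [CompactSpace D]
    [NormedAddCommGroup H₁] [InnerProductSpace ℝ H₁] [CompleteSpace H₁]
    [TopologicalSpace.SeparableSpace H₁]
    [NormedAddCommGroup H₂] [InnerProductSpace ℝ H₂] [CompleteSpace H₂]
    (S : StrongDual ℝ C(D, H₁) →ₗ[ℝ] H₂)
    (Sstar : H₂ →L[ℝ] C(D, H₁))
    (hdual : ∀ (u : StrongDual ℝ C(D, H₁)) (y : H₂),
      (inner ℝ (S u) y : ℝ) = u (Sstar y))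
    [FiniteDimensional ℝ (LinearMap.range S)]
    (p_d : H₂) (hfeas : p_d ∈ LinearMap.range S) :
    ∃ y : H₂, ‖Sstar y‖ ≤ 1 ∧
      ∀ z : H₂, ‖Sstar z‖ ≤ 1 → (inner ℝ p_d z : ℝ) ≤ (inner ℝ p_d y : ℝ) := by
  classical
  set R := LinearMap.range S with hR
  -- Sstar vanishes on the orthogonal complement of R
  have horth : ∀ y : H₂, y ∈ Rᗮ → Sstar y = 0 := by
    intro y hy
    refine SeparatingDual.eq_zero_of_forall_dual_eq_zero (R := ℝ) fun u => ?_
    have h1 : (inner ℝ (S u) y : ℝ) = 0 :=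
      (Submodule.mem_orthogonal R y).mp hy (S u) ⟨u, rfl⟩
    rw [← hdual u y, h1]
  -- restriction of Sstar to R
  let T : R →L[ℝ] C(D, H₁) := Sstar.comp (Submodule.subtypeL R)
  have hTinj : Function.Injective T := by
    intro x x' hxx'
    have h0 : Sstar ((x : H₂) - (x' : H₂)) = 0 := by
      have : Sstar (x : H₂) = Sstar (x' : H₂) := hxx'
      simp [map_sub, this]
    have hmem : ((x : H₂) - (x' : H₂)) ∈ Rᗮ := by
      refine (Submodule.mem_orthogonal' R _).mpr fun v hv => ?_
      obtain ⟨u, rfl⟩ := hv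
      rw [real_inner_comm, hdual u, h0]
      simp
    have hmem2 : ((x : H₂) - (x' : H₂)) ∈ R := sub_mem x.2 x'.2
    have hz0 : (x : H₂) - (x' : H₂) = 0 := by
      have hb := Submodule.inf_orthogonal_eq_bot R
      have hz : (x : H₂) - (x' : H₂) ∈ R ⊓ Rᗮ := ⟨hmem2, hmem⟩
      simpa [hb] using hz
    exact Subtype.ext (sub_eq_zero.mp hz0)
  obtain ⟨K, hK, hAL⟩ := T.toLinearMap.injective_iff_antilipschitz.mp hTinj
  -- feasible set inside R is compact
  let C' : Set R := {x | ‖T x‖ ≤ 1}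
  have hC'cl : IsClosed C' := isClosed_le (continuous_norm.comp T.continuous) continuous_const
  have hsub : C' ⊆ Metric.closedBall 0 (K : ℝ) := by
    intro x hx
    have h2 := hAL.le_mul_dist x 0
    simp only [map_zero, dist_zero_right] at h2
    have h3 : ‖x‖ ≤ (K : ℝ) * ‖T x‖ := by simpa [dist_eq_norm] using h2
    have h4 : (K : ℝ) * ‖T x‖ ≤ (K : ℝ) * 1 :=
      mul_le_mul_of_nonneg_left hx K.coe_nonneg
    simpa [Metric.mem_closedBall, dist_eq_norm] using h3.trans (by simpa using h4)
  have hC'cpt : IsCompact C' := (isCompact_closedBall (0 : R) K).of_isClosed_subset hC'cl hsub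
  -- the feasible set in H₂ restricted to R
  let C : Set H₂ := Subtype.val '' C'
  have hCcpt : IsCompact C := hC'cpt.image continuous_subtype_val
  have hCne : C.Nonempty := ⟨0, ⟨0, by simp [C'], rfl⟩⟩
  obtain ⟨y₀, hy₀C, hmax⟩ := hCcpt.exists_isMaxOn hCne
    ((innerSL ℝ p_d).continuous.continuousOn)
  obtain ⟨x₀, hx₀, rfl⟩ := hy₀C
  refine ⟨x₀, hx₀, fun z hz => ?_⟩
  -- project z onto R
  set z₁ : R := R.orthogonalProjectionOnto z with hz₁def
  have hdiff : z - (z₁ : H₂) ∈ Rᗮ := Submodule.sub_starProjection_mem_orthogonal (K := R) z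
  have hSz : Sstar (z₁ : H₂) = Sstar z := by
    have h0 : Sstar (z - (z₁ : H₂)) = 0 := horth _ hdiff
    have := map_sub Sstar z (z₁ : H₂)
    rw [h0] at this
    exact (sub_eq_zero.mp this.symm).symm
  have hz₁feas : (z₁ : H₂) ∈ C := ⟨z₁, by simpa [C', T, hSz] using hz, rfl⟩
  have h0' : (inner ℝ p_d (z - (z₁ : H₂)) : ℝ) = 0 :=
    (Submodule.mem_orthogonal R _).mp hdiff p_d hfeas
  have hinz : (inner ℝ p_d z : ℝ) = inner ℝ p_d (z₁ : H₂) := by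
    have := inner_sub_right (𝕜 := ℝ) p_d z (z₁ : H₂)
    rw [h0'] at this
    linarith
  rw [hinz]
  exact hmax hz₁feas
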